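/- Let A be a nonnegative n×n real matrix. For every (y,z) ∈ ℝ^n × ℝ^n and every w = (w¹, w²) ∈ ℝ^n × ℝ^n, the Hessian quadratic form satisfies ⟨w, H(y,z) w⟩ = Σ_{i,j} A_{ij} e^{y_i + z_j} (w¹_i + w²_j)² ≥ 0; in particular H(y,z) is positive semidefinite and the function f is convex on ℝ^n × ℝ^n. -/

import Mathlib

open Finset Matrix

lemma quadAux (n : ℕ) (B : Matrix (Fin n) (Fin n) ℝ) (u v : Fin n → ℝ) :
    Sum.elim u v ⬝ᵥ ((Matrix.fromBlocks
      (Matrix.diagonal fun i => ∑ j, B i j) B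
      Bᵀ (Matrix.diagonal fun j => ∑ i, B i j)) *ᵥ Sum.elim u v)
      = ∑ i, ∑ j, B i j * (u i + v j) ^ 2 := by
  simp only [dotProduct, mulVec, Fintype.sum_sum_type, Sum.elim_inl, Sum.elim_inr,
    fromBlocks_apply₁₁, fromBlocks_apply₁₂, fromBlocks_apply₂₁, fromBlocks_apply₂₂,
    diagonal, Matrix.of_apply, transpose_apply, ite_mul, zero_mul,
    Finset.sum_ite_eq, Finset.mem_univ, if_true]
  have e1 : ∀ x : Fin n, u x * ((∑ j, B x j) * u x + ∑ j, B x j * v j)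
      = ∑ j, (B x j * u x ^ 2 + B x j * (u x * v j)) := by
    intro x
    rw [Finset.sum_add_distrib, mul_add, Finset.sum_mul, Finset.mul_sum, Finset.mul_sum]
    congr 1 <;> exact Finset.sum_congr rfl fun j _ => by ring
  have e2 : ∀ x : Fin n, v x * (∑ j, B j x * u j + (∑ i, B i x) * v x)
      = ∑ j, (B j x * (u j * v x) + B j x * v x ^ 2) := by
    intro x
    rw [Finset.sum_add_distrib, mul_add, Finset.sum_mul, Finset.mul_sum, Finset.mul_sum]
    congr 1 <;> exact Finset.sum_congr rfl fun j _ => by ring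
  rw [Finset.sum_congr rfl fun x _ => e1 x, Finset.sum_congr rfl fun x _ => e2 x,
    Finset.sum_comm (f := fun x j => B j x * (u j * v x) + B j x * v x ^ 2),
    ← Finset.sum_add_distrib]
  refine Finset.sum_congr rfl fun i _ => ?_
  rw [← Finset.sum_add_distrib]
  exact Finset.sum_congr rfl fun j _ => by ring

theorem stmt4 (n : ℕ) (A : Matrix (Fin n) (Fin n) ℝ) (hA : ∀ i j, 0 ≤ A i j)
    (y z w₁ w₂ : Fin n → ℝ)
    (B : Matrix (Fin n) (Fin n) ℝ)
    (hB : ∀ i j, B i j = A i j * Real.exp (y i + z j))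
    (H : Matrix (Fin n ⊕ Fin n) (Fin n ⊕ Fin n) ℝ)
    (hH : H = Matrix.fromBlocks
      (Matrix.diagonal fun i => ∑ j, B i j) B
      Bᵀ (Matrix.diagonal fun j => ∑ i, B i j)) :
    (Sum.elim w₁ w₂ ⬝ᵥ (H *ᵥ Sum.elim w₁ w₂)
        = ∑ i, ∑ j, A i j * Real.exp (y i + z j) * (w₁ i + w₂ j) ^ 2)
    ∧ (0 ≤ ∑ i, ∑ j, A i j * Real.exp (y i + z j) * (w₁ i + w₂ j) ^ 2)
    ∧ H.PosSemidef
    ∧ ConvexOn ℝ Set.univ (fun p : (Fin n → ℝ) × (Fin n → ℝ) =>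
        (∑ i, ∑ j, A i j * Real.exp (p.1 i + p.2 j)) - (∑ i, p.1 i) - ∑ j, p.2 j) := by
  subst hH
  have hBnn : ∀ i j, 0 ≤ B i j := fun i j => by
    rw [hB]; exact mul_nonneg (hA i j) (Real.exp_pos _).le
  refine ⟨?_, ?_, ?_, ?_⟩
  · rw [quadAux]
    exact Finset.sum_congr rfl fun i _ => Finset.sum_congr rfl fun j _ => by rw [hB]
  · refine Finset.sum_nonneg fun i _ => Finset.sum_nonneg fun j _ => ?_
    exact mul_nonneg (mul_nonneg (hA i j) (Real.exp_pos _).le) (sq_nonneg _)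
  · rw [posSemidef_iff_dotProduct_mulVec]
    constructor
    · show _ᴴ = _
      ext (i | i) (j | j) <;>
        simp [conjTranspose_apply, fromBlocks, diagonal, Matrix.of_apply] <;> aesop
    · intro x
      have hx : Sum.elim (x ∘ Sum.inl) (x ∘ Sum.inr) = x := by
        funext s; cases s <;> rfl
      have := quadAux n B (x ∘ Sum.inl) (x ∘ Sum.inr)
      rw [hx] at this
      rw [show star x = x from funext fun s => by simp, this]
      exact Finset.sum_nonneg fun i _ => Finset.sum_nonneg fun j _ =>
        mul_nonneg (hBnn i j) (sq_nonneg _)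
  · refine ⟨convex_univ, fun p _ q _ a b ha hb hab => ?_⟩
    simp only [smul_eq_mul, Prod.fst_add, Prod.snd_add, Prod.smul_fst, Prod.smul_snd,
      Pi.add_apply, Pi.smul_apply, smul_eq_mul]
    have hlin1 : ∑ i, (a * p.1 i + b * q.1 i) = a * ∑ i, p.1 i + b * ∑ i, q.1 i := by
      rw [Finset.sum_add_distrib, Finset.mul_sum, Finset.mul_sum]
    have hlin2 : ∑ j, (a * p.2 j + b * q.2 j) = a * ∑ j, p.2 j + b * ∑ j, q.2 j := by
      rw [Finset.sum_add_distrib, Finset.mul_sum, Finset.mul_sum]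
    have hexp : ∑ i, ∑ j, A i j * Real.exp ((a * p.1 i + b * q.1 i) + (a * p.2 j + b * q.2 j))
        ≤ a * (∑ i, ∑ j, A i j * Real.exp (p.1 i + p.2 j))
          + b * (∑ i, ∑ j, A i j * Real.exp (q.1 i + q.2 j)) := by
      rw [Finset.mul_sum, Finset.mul_sum, ← Finset.sum_add_distrib]
      refine Finset.sum_le_sum fun i _ => ?_
      rw [Finset.mul_sum, Finset.mul_sum, ← Finset.sum_add_distrib]
      refine Finset.sum_le_sum fun j _ => ?_
      have h1 : (a * p.1 i + b * q.1 i) + (a * p.2 j + b * q.2 j)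
          = a * (p.1 i + p.2 j) + b * (q.1 i + q.2 j) := by ring
      have h2 := convexOn_exp.2 (Set.mem_univ (p.1 i + p.2 j))
        (Set.mem_univ (q.1 i + q.2 j)) ha hb hab
      simp only [smul_eq_mul] at h2
      calc A i j * Real.exp ((a * p.1 i + b * q.1 i) + (a * p.2 j + b * q.2 j))
          = A i j * Real.exp (a * (p.1 i + p.2 j) + b * (q.1 i + q.2 j)) := by rw [h1]
        _ ≤ A i j * (a * Real.exp (p.1 i + p.2 j) + b * Real.exp (q.1 i + q.2 j)) :=
            mul_le_mul_of_nonneg_left h2 (hA i j)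
        _ = a * (A i j * Real.exp (p.1 i + p.2 j))
            + b * (A i j * Real.exp (q.1 i + q.2 j)) := by ring
    rw [hlin1, hlin2]
    linarith
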